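/- Let F_q be a finite field, let m ≥ 1 and let 1 ≤ s ≤ l be integers. Let τ_1, …, τ_s be nonnegative integers and set τ = min{(l−j+1)τ_j + (l−j) : j = 1,…,s}. If e = (e_1, …, e_l) with each block e_i ∈ F_q^m satisfies wt(e_1) + ⋯ + wt(e_l) ≤ τ, then there exist pairwise distinct indices i_1, …, i_s ∈ {1, …, l} such that wt(e_{i_j}) ≤ τ_j for every j ∈ {1, …, s}. -/

import Mathlib

/-- If the total Hamming weight of the `l` blocks of `e` is at most
`τ = min { (l−j+1)·τ_j + (l−j) : j = 1,…,s }` (written 0-based below), then there are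
pairwise distinct block indices `i_1,…,i_s` with `wt(e_{i_j}) ≤ τ_j` for all `j`. -/
theorem statement0 (F : Type*) [Field F] [Fintype F] [DecidableEq F]
    (m s l : ℕ) (hm : 1 ≤ m) (hs : 1 ≤ s) (hsl : s ≤ l)
    (τj : Fin s → ℕ) (τ : ℕ)
    (hτ : τ = Finset.univ.inf' ⟨⟨0, hs⟩, Finset.mem_univ _⟩
      (fun j : Fin s => (l - j.1) * τj j + (l - j.1 - 1)))
    (e : Fin l → Fin m → F)
    (he : ∑ i, hammingNorm (e i) ≤ τ) :
    ∃ idx : Fin s → Fin l, Function.Injective idx ∧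
      ∀ j : Fin s, hammingNorm (e (idx j)) ≤ τj j := by
  classical
  set w : Fin l → ℕ := fun i => hammingNorm (e i) with hw
  set t : Fin s → Finset (Fin l) :=
    fun j => Finset.univ.filter (fun i : Fin l => w i ≤ τj j) with ht
  have key : ∀ j : Fin s, j.1 + 1 ≤ (t j).card := by
    intro j
    by_contra h
    push_neg at h
    have hlj : j.1 < l := lt_of_lt_of_le j.2 hsl
    have hsplit := Finset.card_filter_add_card_filter_not
      (s := (Finset.univ : Finset (Fin l))) (p := fun i : Fin l => w i ≤ τj j)
    rw [Finset.card_univ, Fintype.card_fin] at hsplit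
    have hcard : l - j.1 ≤ (Finset.univ.filter (fun i : Fin l => ¬ (w i ≤ τj j))).card := by
      have : (t j).card ≤ j.1 := by omega
      simp only [ht] at this ⊢
      omega
    have hsum : (l - j.1) * (τj j + 1) ≤ Finset.univ.sum w := by
      calc (l - j.1) * (τj j + 1)
          ≤ (Finset.univ.filter (fun i : Fin l => ¬ (w i ≤ τj j))).card * (τj j + 1) :=
            Nat.mul_le_mul_right _ hcard
        _ ≤ ∑ i ∈ Finset.univ.filter (fun i : Fin l => ¬ (w i ≤ τj j)), w i := by
            simpa using Finset.card_nsmul_le_sum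
              (Finset.univ.filter (fun i : Fin l => ¬ (w i ≤ τj j))) w (τj j + 1)
              (fun i hi => by have := (Finset.mem_filter.mp hi).2; omega)
        _ ≤ Finset.univ.sum w := Finset.sum_le_sum_of_subset (Finset.filter_subset _ _)
    have hτle : τ ≤ (l - j.1) * τj j + (l - j.1 - 1) := by
      rw [hτ]; exact Finset.inf'_le _ (Finset.mem_univ j)
    have hfin : Finset.univ.sum w ≤ (l - j.1) * τj j + (l - j.1 - 1) := le_trans he hτle
    have hmul : (l - j.1) * (τj j + 1) = (l - j.1) * τj j + (l - j.1) := by ring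
    omega
  have hall : ∀ (A : Finset (Fin s)), A.card ≤ (A.biUnion t).card := by
    intro A
    rcases A.eq_empty_or_nonempty with rfl | hA
    · simp
    · obtain ⟨jm, hjm, hmax⟩ := A.exists_max_image (fun j => j.1) hA
      have h1 : A.card ≤ jm.1 + 1 := by
        have : A.card ≤ (Finset.range (jm.1 + 1)).card := by
          apply Finset.card_le_card_of_injOn (fun j => j.1)
          · intro j hj
            simp only [Finset.mem_coe, Finset.mem_range]
            exact Nat.lt_succ_of_le (hmax j hj)
          · exact fun a _ b _ hab => Fin.val_injective hab
        simpa using this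
      have h2 : jm.1 + 1 ≤ (A.biUnion t).card :=
        le_trans (key jm) (Finset.card_le_card (Finset.subset_biUnion_of_mem t hjm))
      omega
  obtain ⟨f, hfinj, hf⟩ := (Finset.all_card_le_biUnion_card_iff_exists_injective t).mp hall
  exact ⟨f, hfinj, fun j => (Finset.mem_filter.mp (hf j)).2⟩
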